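/- Let gcd(P²,w) = R (monic gcd). Then R is the square of a monic polynomial Q, and moreover Q = gcd(P,v,w) (monic gcd). In other words, gcd(P²,w) = (gcd(P,v,w))². -/
import Mathlib


open Polynomial

/-- In a GCD setting, `gcd (a²) (b²)` divides `gcd a b ^ 2`. -/
lemma gcd_sq_dvd_sq_gcd (a b : Polynomial ℂ) : gcd (a ^ 2) (b ^ 2) ∣ gcd a b ^ 2 := by
  obtain ⟨a', b', ha, hb, hu⟩ := extract_gcd a b
  have hco : IsCoprime a' b' := (gcd_isUnit_iff a' b').1 hu
  have hu2 : IsUnit (gcd (a' ^ 2) (b' ^ 2)) := (gcd_isUnit_iff _ _).2 (hco.pow)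
  have h1 : gcd (a ^ 2) (b ^ 2) ∣ gcd a b ^ 2 * gcd (a' ^ 2) (b' ^ 2) := by
    have key : gcd (a ^ 2) (b ^ 2)
        = gcd (gcd a b ^ 2 * a' ^ 2) (gcd a b ^ 2 * b' ^ 2) := by
      rw [← mul_pow, ← mul_pow, ← ha, ← hb]
    rw [key]
    exact (gcd_mul_left' (gcd a b ^ 2) (a' ^ 2) (b' ^ 2)).dvd
  refine h1.trans ?_
  calc gcd a b ^ 2 * gcd (a' ^ 2) (b' ^ 2) ∣ gcd a b ^ 2 * 1 :=
        mul_dvd_mul_left _ (isUnit_iff_dvd_one.1 hu2)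
    _ = gcd a b ^ 2 := mul_one _

/-- Lemma (Deg), second part: the monic gcd `R = gcd(P², w)` is the square of a monic
polynomial `Q`, and `Q = gcd(P, v, w)`. -/
theorem stmt_2
    (g : ℕ) (hg : 1 ≤ g) (h h' P u v w : Polynomial ℂ)
    (hhmon : h.Monic) (hhdeg : h.natDegree = 2 * g + 1)
    (hPmon : P.Monic) (hPdvd : P ^ 2 ∣ h)
    (hPmax : ∀ S : Polynomial ℂ, S.Monic → S ^ 2 ∣ h → S.natDegree ≤ P.natDegree)
    (hh' : h = P ^ 2 * h')
    (humon : u.Monic) (hudeg : u.natDegree = g)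
    (hwmon : w.Monic) (hwdeg : w.natDegree = g + 1)
    (hvdeg : v.degree ≤ ((g - 1 : ℕ) : WithBot ℕ))
    (heq : v ^ 2 + u * w = h)
    (hcop : gcd u (gcd v w) = 1) :
    ∃ Q : Polynomial ℂ, Q.Monic ∧ gcd (P ^ 2) w = Q ^ 2 ∧ Q = gcd P (gcd v w) := by
  set Q : Polynomial ℂ := gcd P (gcd v w) with hQdef
  have hP0 : P ≠ 0 := hPmon.ne_zero
  have hQ0 : Q ≠ 0 := fun h0 => hP0 ((gcd_eq_zero_iff _ _).1 h0).1
  have hQmon : Q.Monic := by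
    have := Polynomial.monic_normalize (p := Q) hQ0
    rwa [hQdef, normalize_gcd] at this
  have hQP : Q ∣ P := gcd_dvd_left _ _
  have hQv : Q ∣ v := (gcd_dvd_right _ _).trans (gcd_dvd_left _ _)
  have hQw : Q ∣ w := (gcd_dvd_right _ _).trans (gcd_dvd_right _ _)
  -- Direction 1 : Q ^ 2 ∣ gcd (P ^ 2) w
  have h1 : Q ^ 2 ∣ v ^ 2 + u * w := by
    rw [heq, hh']
    exact (pow_dvd_pow_of_dvd hQP 2).mul_right _
  have h3 : Q ^ 2 ∣ u * w := (dvd_add_right (pow_dvd_pow_of_dvd hQv 2)).mp h1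
  have hcoQ : IsCoprime u Q := by
    have huvw : IsCoprime u (gcd v w) := by
      have : IsUnit (gcd u (gcd v w)) := by rw [hcop]; exact isUnit_one
      exact (gcd_isUnit_iff _ _).1 this
    exact huvw.of_isCoprime_of_dvd_right (gcd_dvd_right P (gcd v w))
  have h4 : Q ^ 2 ∣ w := (hcoQ.symm.pow_left).dvd_of_dvd_mul_left h3
  have d1 : Q ^ 2 ∣ gcd (P ^ 2) w := dvd_gcd (pow_dvd_pow_of_dvd hQP 2) h4
  -- Direction 2 : gcd (P ^ 2) w ∣ Q ^ 2
  have hv2 : v ^ 2 = P ^ 2 * h' - u * w := by rw [← hh', ← heq]; ring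
  have hRv2 : gcd (P ^ 2) w ∣ v ^ 2 := by
    rw [hv2]
    exact dvd_sub ((gcd_dvd_left _ _).mul_right _) ((gcd_dvd_right _ _).mul_left _)
  have hRw2 : gcd (P ^ 2) w ∣ w ^ 2 :=
    (gcd_dvd_right _ _).trans (dvd_pow_self w (by norm_num))
  have d2 : gcd (P ^ 2) w ∣ Q ^ 2 := by
    have step1 : gcd (P ^ 2) w ∣ gcd (P ^ 2) (gcd (v ^ 2) (w ^ 2)) :=
      dvd_gcd (gcd_dvd_left _ _) (dvd_gcd hRv2 hRw2)
    have step2 : gcd (P ^ 2) (gcd (v ^ 2) (w ^ 2)) ∣ gcd (P ^ 2) (gcd v w ^ 2) :=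
      gcd_dvd_gcd dvd_rfl (gcd_sq_dvd_sq_gcd v w)
    exact (step1.trans step2).trans (gcd_sq_dvd_sq_gcd P (gcd v w))
  -- Conclusion
  have hRmon : (gcd (P ^ 2) w).Monic := by
    have hR0 : gcd (P ^ 2) w ≠ 0 := fun h0 =>
      (pow_ne_zero 2 hP0) ((gcd_eq_zero_iff _ _).1 h0).1
    have := Polynomial.monic_normalize (p := gcd (P ^ 2) w) hR0
    rwa [normalize_gcd] at this
  exact ⟨Q, hQmon, Polynomial.eq_of_monic_of_associated hRmon (hQmon.pow _)
    (associated_of_dvd_dvd d2 d1), rfl⟩
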